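/- If ḡ : ℝ → ℝ is four times differentiable, satisfies (ḡ'''' - 10 ḡ'' + 9 ḡ) = 0 (i.e. (∂² - 1)(∂² - 9)ḡ = 0), and ḡ(x) ≠ 0, then h := -ḡ'/ḡ satisfies h''' - 4 h h'' - (10 - 6 h² + 3 h') h' - (h² - 1)(h² - 9) = 0. -/

import Mathlib

open Filter Topology

/-- Linearization of the n = 3 Riccati-type equation: if
`ḡ'''' - 10 ḡ'' + 9 ḡ = 0` and `ḡ x ≠ 0`, then `h := -ḡ'/ḡ` satisfies
`h''' - 4 h h'' - (10 - 6 h² + 3 h') h' - (h² - 1)(h² - 9) = 0` at `x`. -/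
theorem stmt10 (g : ℝ → ℝ)
    (hg : Differentiable ℝ g) (hg' : Differentiable ℝ (deriv g))
    (hg'' : Differentiable ℝ (deriv (deriv g)))
    (hg''' : Differentiable ℝ (deriv (deriv (deriv g))))
    (hODE : ∀ t, deriv (deriv (deriv (deriv g))) t - 10 * deriv (deriv g) t + 9 * g t = 0)
    (x : ℝ) (hx : g x ≠ 0) :
    (let h : ℝ → ℝ := fun t => -deriv g t / g t
    deriv (deriv (deriv h)) x - 4 * h x * deriv (deriv h) x -
      (10 - 6 * (h x) ^ 2 + 3 * deriv h x) * deriv h x -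
      ((h x) ^ 2 - 1) * ((h x) ^ 2 - 9) = 0) := by
  intro h
  have dg : ∀ t, HasDerivAt g (deriv g t) t := fun t => hg.differentiableAt.hasDerivAt
  have dg1 : ∀ t, HasDerivAt (deriv g) (deriv (deriv g) t) t :=
    fun t => hg'.differentiableAt.hasDerivAt
  have dg2 : ∀ t, HasDerivAt (deriv (deriv g)) (deriv (deriv (deriv g)) t) t :=
    fun t => hg''.differentiableAt.hasDerivAt
  have dg3 : ∀ t, HasDerivAt (deriv (deriv (deriv g))) (deriv (deriv (deriv (deriv g))) t) t :=
    fun t => hg'''.differentiableAt.hasDerivAt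
  set h1 : ℝ → ℝ := fun t =>
    ((deriv g t) ^ 2 - deriv (deriv g) t * g t) / (g t) ^ 2 with h1def
  set h2 : ℝ → ℝ := fun t =>
    ((deriv g t * deriv (deriv g) t - deriv (deriv (deriv g)) t * g t) * (g t) ^ 2 -
      ((deriv g t) ^ 2 - deriv (deriv g) t * g t) * (2 * g t * deriv g t)) / ((g t) ^ 2) ^ 2
    with h2def
  have key1 : ∀ t, g t ≠ 0 → HasDerivAt h (h1 t) t := by
    intro t ht
    have := ((dg1 t).neg.div (dg t) ht)
    refine this.congr_deriv ?_
    simp only [Pi.neg_apply, Pi.pow_apply, Pi.sub_apply, Pi.mul_apply, Nat.cast_ofNat]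
    rw [div_eq_div_iff (pow_ne_zero 2 ht) (pow_ne_zero 2 ht)]
    ring
  have key2 : ∀ t, g t ≠ 0 → HasDerivAt h1 (h2 t) t := by
    intro t ht
    have := (((dg1 t).pow 2).sub ((dg2 t).mul (dg t))).div ((dg t).pow 2) (pow_ne_zero 2 ht)
    refine this.congr_deriv ?_
    simp only [Pi.neg_apply, Pi.pow_apply, Pi.sub_apply, Pi.mul_apply, Nat.cast_ofNat]
    rw [div_eq_div_iff (pow_ne_zero 2 (pow_ne_zero 2 ht)) (pow_ne_zero 2 (pow_ne_zero 2 ht))]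
    ring
  have ne_ev : ∀ t, g t ≠ 0 → ∀ᶠ s in 𝓝 t, g s ≠ 0 :=
    fun t ht => hg.continuous.continuousAt.eventually_ne ht
  have E1 : ∀ t, g t ≠ 0 → deriv h t = h1 t := fun t ht => (key1 t ht).deriv
  have E2 : ∀ t, g t ≠ 0 → deriv (deriv h) t = h2 t := by
    intro t ht
    have hev : deriv h =ᶠ[𝓝 t] h1 := (ne_ev t ht).mono fun s hs => E1 s hs
    rw [hev.deriv_eq, (key2 t ht).deriv]
  have K := ((((dg1 x).mul (dg2 x)).sub ((dg3 x).mul (dg x))).mul ((dg x).pow 2) |>.sub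
      ((((dg1 x).pow 2).sub ((dg2 x).mul (dg x))).mul (((dg x).const_mul 2).mul (dg1 x)))).div
      (((dg x).pow 2).pow 2) (pow_ne_zero 2 (pow_ne_zero 2 hx))
  have E3 : deriv (deriv (deriv h)) x = deriv h2 x := by
    have hev : deriv (deriv h) =ᶠ[𝓝 x] h2 := (ne_ev x hx).mono fun s hs => E2 s hs
    exact hev.deriv_eq
  have hx' : h x = -deriv g x / g x := rfl
  have he : deriv (deriv (deriv (deriv g))) x = 10 * deriv (deriv g) x - 9 * g x := by
    linarith [hODE x]
  rw [E3, (show HasDerivAt h2 _ x from K).deriv, E2 x hx, E1 x hx, hx', h1def, h2def]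
  simp only [Pi.neg_apply, Pi.pow_apply, Pi.sub_apply, Pi.mul_apply, Nat.cast_ofNat]
  rw [he]
  field_simp
  ring
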